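/- Let σ and w be unit vectors in ℂ^N with ⟨w,σ⟩ = ⟨σ,w⟩ = x for some real 0 < x < 1, let E > 0 be real, set θ = arccos x and η = E·sin(2θ). Let H = 2iEx·(|w⟩⟨σ| − |σ⟩⟨w|). Then at time t = θ/η, exp(−iHt)·σ = w exactly. -/

import Mathlib

open scoped InnerProductSpace

/-- The outer product |u⟩⟨v| : the rank-one operator sending φ to ⟨v,φ⟩·u
(inner product conjugate-linear in the first argument). -/
noncomputable def outer {N : ℕ} (u v : EuclideanSpace ℂ (Fin N)) :
    EuclideanSpace ℂ (Fin N) →L[ℂ] EuclideanSpace ℂ (Fin N) :=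
  ContinuousLinearMap.toSpanSingleton ℂ u ∘L (innerSL ℂ v)

lemma exp_apply_eigen {N : ℕ} (M : EuclideanSpace ℂ (Fin N) →L[ℂ] EuclideanSpace ℂ (Fin N))
    (v : EuclideanSpace ℂ (Fin N)) (μ : ℂ) (h : M v = μ • v) :
    NormedSpace.exp M v = Complex.exp μ • v := by
  have hpow : ∀ n : ℕ, (M ^ n) v = μ ^ n • v := by
    intro n
    induction n with
    | zero => simp
    | succ n ih =>
      rw [pow_succ, ContinuousLinearMap.mul_apply, h, map_smul, ih, smul_smul, pow_succ, mul_comm]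
  have hsum : Summable fun n : ℕ => ((Nat.factorial n : ℂ))⁻¹ • M ^ n :=
    NormedSpace.expSeries_summable' M
  have happ : NormedSpace.exp M v = ∑' n : ℕ, (((Nat.factorial n : ℂ))⁻¹ • M ^ n) v := by
    rw [NormedSpace.exp_eq_tsum (𝕂 := ℂ)]
    exact (ContinuousLinearMap.apply ℂ _ v).map_tsum hsum
  rw [happ]
  have : ∀ n : ℕ, (((Nat.factorial n : ℂ))⁻¹ • M ^ n) v = (((Nat.factorial n : ℂ))⁻¹ • μ ^ n) • v := by
    intro n
    simp [hpow n, smul_smul]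
  simp_rw [this]
  rw [Summable.tsum_smul_const ?_, show Complex.exp μ = NormedSpace.exp μ from congrFun Complex.exp_eq_exp_ℂ μ, NormedSpace.exp_eq_tsum (𝕂 := ℂ)]
  exact NormedSpace.expSeries_summable' μ

theorem stmt_7 {N : ℕ} (σ w : EuclideanSpace ℂ (Fin N))
    (hσ : ‖σ‖ = 1) (hw : ‖w‖ = 1) (x : ℝ) (hx0 : 0 < x) (hx1 : x < 1)
    (hwσ : ⟪w, σ⟫_ℂ = (x : ℂ)) (hσw : ⟪σ, w⟫_ℂ = (x : ℂ))
    (E : ℝ) (hE : 0 < E) (θ η : ℝ) (hθ : θ = Real.arccos x)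
    (hη : η = E * Real.sin (2 * θ))
    (H : EuclideanSpace ℂ (Fin N) →L[ℂ] EuclideanSpace ℂ (Fin N))
    (hH : H = (2 * Complex.I * (E : ℂ) * (x : ℂ)) • (outer w σ - outer σ w))
    (t : ℝ) (ht : t = θ / η) :
    NormedSpace.exp ((-(Complex.I * (t : ℂ))) • H) σ = w := by
  have hx1' : x ≤ 1 := le_of_lt hx1
  have hxm1 : (-1 : ℝ) ≤ x := by linarith
  have hcos : Real.cos θ = x := by rw [hθ]; exact Real.cos_arccos hxm1 hx1'
  have hθpos : 0 < θ := by rw [hθ]; exact Real.arccos_pos.mpr hx1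
  have hθlt : θ < Real.pi / 2 := by rw [hθ]; exact Real.arccos_lt_pi_div_two.mpr hx0
  set s : ℝ := Real.sin θ with hs_def
  have hspos : 0 < s := Real.sin_pos_of_pos_of_lt_pi hθpos (by linarith [Real.pi_pos])
  have hs2r : s ^ 2 = 1 - x ^ 2 := by
    have := Real.sin_sq_add_cos_sq θ
    rw [hcos] at this; linarith
  have hη2 : η = 2 * E * x * s := by
    rw [hη, Real.sin_two_mul, hcos]; ring
  set X : ℂ := (x : ℂ) with hX
  set S : ℂ := (s : ℂ) with hS
  set T : ℂ := (θ : ℂ) with hT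
  have hSne : S ≠ 0 := by
    rw [hS]; exact_mod_cast ne_of_gt hspos
  have hs2 : S ^ 2 = 1 - X ^ 2 := by rw [hS, hX]; exact_mod_cast hs2r
  set c : ℂ := ((θ / s : ℝ) : ℂ) with hc
  have hcS : c * S = T := by
    rw [hc, hS, hT]
    push_cast
    field_simp
    exact mul_div_cancel_right₀ _ (by exact_mod_cast hspos.ne')
  set M := (-(Complex.I * (t : ℂ))) • H with hM_def
  have hM : M = c • (outer w σ - outer σ w) := by
    rw [hM_def, hH, smul_smul]
    congr 1
    have hreal : 2 * t * E * x = θ / s := by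
      rw [ht, hη2]
      field_simp
    have h2 : -(Complex.I * (t : ℂ)) * (2 * Complex.I * (E : ℂ) * X) = ((2 * t * E * x : ℝ) : ℂ) := by
      rw [hX]; push_cast
      linear_combination (-2 * (t : ℂ) * (E : ℂ) * (x : ℂ)) * Complex.I_sq
    rw [h2, hreal, hc]
  have hσσ : ⟪σ, σ⟫_ℂ = 1 := by
    rw [inner_self_eq_norm_sq_to_K, hσ]; norm_num
  have hww : ⟪w, w⟫_ℂ = 1 := by
    rw [inner_self_eq_norm_sq_to_K, hw]; norm_num
  have hMapp : ∀ φ, M φ = c • (⟪σ, φ⟫_ℂ • w - ⟪w, φ⟫_ℂ • σ) := by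
    intro φ
    rw [hM]
    simp only [outer, ContinuousLinearMap.smul_apply, ContinuousLinearMap.sub_apply,
      ContinuousLinearMap.coe_comp', Function.comp_apply,
      ContinuousLinearMap.toSpanSingleton_apply, innerSL_apply_apply]
  set d : ℂ := X + S * Complex.I with hd
  set e : ℂ := X - S * Complex.I with he
  have hde : d * e = 1 := by
    rw [hd, he]
    linear_combination hs2 - Complex.I_sq * S ^ 2
  set vp := σ - d • w with hvp
  set vm := σ - e • w with hvm
  have hMp : M vp = (T * Complex.I) • vp := by
    rw [hvp, hMapp]
    rw [inner_sub_right, inner_smul_right, inner_sub_right, inner_smul_right,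
      hσσ, hww, hwσ, hσw]
    have h1 : c * (1 - d * X) = (T * Complex.I) * (-d) := by
      rw [hd]
      linear_combination (-c) * hs2 + (S - X * Complex.I) * hcS + T * S * Complex.I_sq
    have h2 : c * (X - d * 1) = (T * Complex.I) * (-1) := by
      rw [hd]
      linear_combination (-Complex.I) * hcS
    rw [smul_sub, smul_smul, smul_smul, h1, h2]
    module
  have hMm : M vm = (-(T * Complex.I)) • vm := by
    rw [hvm, hMapp]
    rw [inner_sub_right, inner_smul_right, inner_sub_right, inner_smul_right,
      hσσ, hww, hwσ, hσw]
    have h1 : c * (1 - e * X) = (-(T * Complex.I)) * (-e) := by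
      rw [he]
      linear_combination (-c) * hs2 + (S + X * Complex.I) * hcS + T * S * Complex.I_sq
    have h2 : c * (X - e * 1) = (-(T * Complex.I)) * (-1) := by
      rw [he]
      linear_combination Complex.I * hcS
    rw [smul_sub, smul_smul, smul_smul, h1, h2]
    module
  have hexpd : Complex.exp (T * Complex.I) = d := by
    rw [hT, Complex.exp_mul_I, ← Complex.ofReal_cos, ← Complex.ofReal_sin, hcos, hd, hX, hS]
  have hexpe : Complex.exp (-(T * Complex.I)) = e := by
    have h1 : Complex.exp (-(T * Complex.I)) * d = 1 := by
      rw [← hexpd, ← Complex.exp_add]; simp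
    linear_combination e * h1 - Complex.exp (-(T * Complex.I)) * hde
  have hp := exp_apply_eigen M vp (T * Complex.I) hMp
  have hm := exp_apply_eigen M vm (-(T * Complex.I)) hMm
  rw [hexpd] at hp
  rw [hexpe] at hm
  have h3 : vp - (d * d) • vm = (1 - d * d) • σ := by
    rw [hvp, hvm]
    match_scalars
    · ring
    · linear_combination d * hde
  have h4 : d • vp - d • vm = (1 - d * d) • w := by
    rw [hvp, hvm]
    match_scalars
    · ring
    · linear_combination hde
  have h5 : (1 - d * d) • NormedSpace.exp M σ = (1 - d * d) • w := by
    rw [← map_smul, ← h3, map_sub, map_smul, hp, hm, smul_smul,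
      show d * d * e = d by linear_combination d * hde, ← h4]
  have hne : (1 - d * d) ≠ 0 := by
    have heq : 1 - d * d = 2 * S * (S - X * Complex.I) := by
      rw [hd]
      linear_combination (-1 : ℂ) * hs2 + (-S ^ 2) * Complex.I_sq
    rw [heq]
    refine mul_ne_zero (mul_ne_zero two_ne_zero hSne) ?_
    intro h0
    have : (S - X * Complex.I).re = s := by rw [hS, hX]; simp
    rw [h0] at this
    simp at this
    exact (ne_of_gt hspos) this.symm
  exact smul_right_injective _ hne h5
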